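/- Let f be a discrete Morse-Bott function on a finite abstract simplicial complex K, C a collection for f with common value v, and I = C^red its reduced collection, assumed nonempty. Let N be the closure of I and E = {σ ∈ N ∖ I : f(σ) ≤ v}. Then E = {σ ∈ N ∖ I : f(σ) < v} ∪ {σ ∈ N ∖ I : f(σ) = v and σ is upward noncritical w.r.t. C}. -/

import Mathlib

open Finset

noncomputable section
open scoped Classical

/-- `σ` is a facet of `τ`: `σ ⊆ τ` and `dim σ = dim τ − 1`. -/
def Facet (σ τ : Finset ℕ) : Prop := σ ⊆ τ ∧ σ.card + 1 = τ.card

/-- A finite abstract simplicial complex: a finite family of nonempty finite sets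
closed under taking nonempty subsets. -/
def IsComplex (K : Finset (Finset ℕ)) : Prop :=
  (∀ σ ∈ K, σ.Nonempty) ∧ ∀ σ ∈ K, ∀ ν, ν ⊆ σ → ν.Nonempty → ν ∈ K

/-- The closure of a set of cells: all nonempty subsets of its cells. -/
def closureOf (S : Finset (Finset ℕ)) : Finset (Finset ℕ) :=
  S.biUnion fun σ => σ.powerset.filter fun ν => ν ≠ ∅

/-- The graph on `C` joining two cells whenever their closures intersect is connected. -/
def ConnectedOn (C : Finset (Finset ℕ)) : Prop :=
  ∀ a ∈ C, ∀ b ∈ C,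
    Relation.ReflTransGen
      (fun x y => x ∈ C ∧ y ∈ C ∧ (closureOf {x} ∩ closureOf {y}).Nonempty) a b

/-- A nonempty set of cells of `K`, all with the same `f`-value, whose
closure-intersection graph is connected. -/
def IsPreCollection (K : Finset (Finset ℕ)) (f : Finset ℕ → ℝ) (C : Finset (Finset ℕ)) :
    Prop :=
  C ⊆ K ∧ C.Nonempty ∧ (∀ σ ∈ C, ∀ τ ∈ C, f σ = f τ) ∧ ConnectedOn C

/-- A collection for `f`: a maximal constant-value connected set of cells. -/
def IsCollection (K : Finset (Finset ℕ)) (f : Finset ℕ → ℝ) (C : Finset (Finset ℕ)) :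
    Prop :=
  IsPreCollection K f C ∧ ∀ C', IsPreCollection K f C' → C ⊆ C' → C' = C

/-- `#{τ ∉ C : σ < τ, f(τ) < f(σ)}`. -/
def UpCount (K : Finset (Finset ℕ)) (f : Finset ℕ → ℝ) (C : Finset (Finset ℕ))
    (σ : Finset ℕ) : ℕ :=
  (K.filter fun τ => τ ∉ C ∧ Facet σ τ ∧ f τ < f σ).card

/-- `#{ν ∉ C : ν < σ, f(ν) > f(σ)}`. -/
def DownCount (K : Finset (Finset ℕ)) (f : Finset ℕ → ℝ) (C : Finset (Finset ℕ))
    (σ : Finset ℕ) : ℕ :=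
  (K.filter fun ν => ν ∉ C ∧ Facet ν σ ∧ f σ < f ν).card

/-- A discrete Morse-Bott function on `K`. -/
def IsMorseBott (K : Finset (Finset ℕ)) (f : Finset ℕ → ℝ) : Prop :=
  ∀ C, IsCollection K f C → ∀ σ ∈ C, UpCount K f C σ ≤ 1 ∧ DownCount K f C σ ≤ 1

/-- `σ` is upward noncritical w.r.t. `C`. -/
def UpNoncrit (K : Finset (Finset ℕ)) (f : Finset ℕ → ℝ) (C : Finset (Finset ℕ))
    (σ : Finset ℕ) : Prop :=
  ∃ w ∈ K, w ∉ C ∧ Facet σ w ∧ f w < f σ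

/-- `σ` is downward noncritical w.r.t. `C`. -/
def DownNoncrit (K : Finset (Finset ℕ)) (f : Finset ℕ → ℝ) (C : Finset (Finset ℕ))
    (σ : Finset ℕ) : Prop :=
  ∃ w ∈ K, w ∉ C ∧ Facet w σ ∧ f σ < f w

/-- The reduced collection `C^red`: the cells of `C` that are neither upward nor
downward noncritical w.r.t. `C`. -/
def reducedOf (K : Finset (Finset ℕ)) (f : Finset ℕ → ℝ) (C : Finset (Finset ℕ)) :
    Finset (Finset ℕ) :=
  C.filter fun σ => ¬ UpNoncrit K f C σ ∧ ¬ DownNoncrit K f C σ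

/-- A noncritical pair: a two-element set `{σ, τ}` with `σ < τ` and `f σ ≥ f τ`. -/
def IsNoncritPair (f : Finset ℕ → ℝ) (S : Finset (Finset ℕ)) : Prop :=
  ∃ σ τ, Facet σ τ ∧ f τ ≤ f σ ∧ S = {σ, τ}

/-- A discrete Morse function in Forman's sense. -/
def IsDiscreteMorse (K : Finset (Finset ℕ)) (g : Finset ℕ → ℝ) : Prop :=
  ∀ σ ∈ K, (K.filter fun τ => Facet σ τ ∧ g τ ≤ g σ).card ≤ 1 ∧
    (K.filter fun ν => Facet ν σ ∧ g σ ≤ g ν).card ≤ 1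

/-- A critical cell of `g`. -/
def IsCritical (K : Finset (Finset ℕ)) (g : Finset ℕ → ℝ) (σ : Finset ℕ) : Prop :=
  σ ∈ K ∧ (K.filter fun τ => Facet σ τ ∧ g τ ≤ g σ).card = 0 ∧
    (K.filter fun ν => Facet ν σ ∧ g σ ≤ g ν).card = 0


/-- Every cell belongs to some collection. -/
lemma exists_collection (K : Finset (Finset ℕ)) (f : Finset ℕ → ℝ) {ν : Finset ℕ}
    (hν : ν ∈ K) : ∃ D, IsCollection K f D ∧ ν ∈ D := by
  classical
  set S := K.powerset.filter (fun D => IsPreCollection K f D ∧ ν ∈ D) with hS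
  have hmem : ({ν} : Finset (Finset ℕ)) ∈ S := by
    rw [hS, Finset.mem_filter, Finset.mem_powerset]
    refine ⟨by simpa using hν, ⟨by simpa using hν, ⟨ν, by simp⟩, ?_, ?_⟩, by simp⟩
    · intro σ hσ τ hτ
      simp only [Finset.mem_singleton] at hσ hτ; subst hσ; subst hτ; rfl
    · intro a ha b hb
      simp only [Finset.mem_singleton] at ha hb; subst ha; subst hb; exact .refl
  obtain ⟨D, hD, hmax⟩ := S.exists_max_image Finset.card ⟨_, hmem⟩
  rw [hS, Finset.mem_filter] at hD
  refine ⟨D, ⟨hD.2.1, ?_⟩, hD.2.2⟩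
  intro C' hC' hsub
  have hC'S : C' ∈ S := by
    rw [hS, Finset.mem_filter, Finset.mem_powerset]
    exact ⟨hC'.1, hC', hsub hD.2.2⟩
  exact (Finset.eq_of_subset_of_card_le hsub (hmax _ hC'S)).symm

lemma precoll_const {K : Finset (Finset ℕ)} {f : Finset ℕ → ℝ} {D : Finset (Finset ℕ)}
    (hD : IsPreCollection K f D) {a b : Finset ℕ} (ha : a ∈ D) (hb : b ∈ D) :
    f a = f b := hD.2.2.1 a ha b hb

/-- One step up: from a cell `ν` strictly below facet level inside `τ` with `v < f ν`,
produce a cofacet inside `τ` still with value `> v`. -/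
lemma step_up (K : Finset (Finset ℕ)) (hK : IsComplex K) (f : Finset ℕ → ℝ)
    (hf : IsMorseBott K f) {ν τ : Finset ℕ} (hτ : τ ∈ K) (hsub : ν ⊆ τ)
    (hν : ν.Nonempty) (hcard : ν.card + 2 ≤ τ.card) {v : ℝ} (hv : v < f ν) :
    ∃ μ ∈ K, Facet ν μ ∧ μ ⊆ τ ∧ v < f μ := by
  classical
  have hνK : ν ∈ K := hK.2 τ hτ ν hsub hν
  obtain ⟨D, hD, hνD⟩ := exists_collection K f hνK
  have hup : UpCount K f D ν ≤ 1 := (hf D hD ν hνD).1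
  have hcd : 2 ≤ (τ \ ν).card := by
    have := Finset.card_sdiff_of_subset hsub
    omega
  obtain ⟨a, ha, b, hb, hab⟩ := Finset.one_lt_card.mp hcd
  have haν : a ∉ ν := (Finset.mem_sdiff.mp ha).2
  have hbν : b ∉ ν := (Finset.mem_sdiff.mp hb).2
  have haτ : a ∈ τ := (Finset.mem_sdiff.mp ha).1
  have hbτ : b ∈ τ := (Finset.mem_sdiff.mp hb).1
  set μ₁ := insert a ν with hμ₁
  set μ₂ := insert b ν with hμ₂
  have hμ₁τ : μ₁ ⊆ τ := Finset.insert_subset haτ hsub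
  have hμ₂τ : μ₂ ⊆ τ := Finset.insert_subset hbτ hsub
  have hμ₁K : μ₁ ∈ K := hK.2 τ hτ μ₁ hμ₁τ ⟨a, Finset.mem_insert_self _ _⟩
  have hμ₂K : μ₂ ∈ K := hK.2 τ hτ μ₂ hμ₂τ ⟨b, Finset.mem_insert_self _ _⟩
  have hF₁ : Facet ν μ₁ := ⟨Finset.subset_insert _ _, (Finset.card_insert_of_notMem haν).symm⟩
  have hF₂ : Facet ν μ₂ := ⟨Finset.subset_insert _ _, (Finset.card_insert_of_notMem hbν).symm⟩
  by_cases h1 : μ₁ ∈ D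
  · exact ⟨μ₁, hμ₁K, hF₁, hμ₁τ, (precoll_const hD.1 hνD h1) ▸ hv⟩
  by_cases h2 : μ₂ ∈ D
  · exact ⟨μ₂, hμ₂K, hF₂, hμ₂τ, (precoll_const hD.1 hνD h2) ▸ hv⟩
  by_cases h3 : f ν ≤ f μ₁
  · exact ⟨μ₁, hμ₁K, hF₁, hμ₁τ, lt_of_lt_of_le hv h3⟩
  by_cases h4 : f ν ≤ f μ₂
  · exact ⟨μ₂, hμ₂K, hF₂, hμ₂τ, lt_of_lt_of_le hv h4⟩
  exfalso
  have hne : μ₁ ≠ μ₂ := by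
    intro h
    apply hab
    have : a ∈ μ₂ := h ▸ Finset.mem_insert_self a ν
    rcases Finset.mem_insert.mp this with h' | h'
    · exact h'
    · exact absurd h' haν
  have hsub2 : ({μ₁, μ₂} : Finset (Finset ℕ)) ⊆
      K.filter fun μ => μ ∉ D ∧ Facet ν μ ∧ f μ < f ν := by
    intro x hx
    rcases Finset.mem_insert.mp hx with h | h
    · subst h; exact Finset.mem_filter.mpr ⟨hμ₁K, h1, hF₁, lt_of_not_ge h3⟩
    · rw [Finset.mem_singleton] at h; subst h
      exact Finset.mem_filter.mpr ⟨hμ₂K, h2, hF₂, lt_of_not_ge h4⟩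
  have : 2 ≤ UpCount K f D ν := by
    have := Finset.card_le_card hsub2
    rwa [Finset.card_insert_of_notMem (by simpa using hne), Finset.card_singleton] at this
  omega

/-- Descent: a cell strictly below `τ` with value `> v` forces `τ` to be downward
noncritical w.r.t. `C` (whose common value is `v`). -/
lemma descend (K : Finset (Finset ℕ)) (hK : IsComplex K) (f : Finset ℕ → ℝ)
    (hf : IsMorseBott K f) (C : Finset (Finset ℕ)) {v : ℝ} (hv : ∀ τ ∈ C, f τ = v)
    {τ : Finset ℕ} (hτ : τ ∈ K) (hfτ : f τ = v) :
    ∀ n : ℕ, 1 ≤ n → ∀ ν, ν ∈ K → ν ⊆ τ → ν.card + n = τ.card → v < f ν →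
      DownNoncrit K f C τ := by
  intro n
  induction n with
  | zero => omega
  | succ n ih =>
    intro _ ν hνK hsub hcard hfν
    have hνC : ν ∉ C := fun h => absurd (hv ν h) (by linarith)
    rcases Nat.eq_zero_or_pos n with h | h
    · subst h
      exact ⟨ν, hνK, hνC, ⟨hsub, by omega⟩, by rw [hfτ]; exact hfν⟩
    · obtain ⟨μ, hμK, hF, hμτ, hfμ⟩ := step_up K hK f hf hτ hsub
        (hK.1 ν hνK) (by omega) hfν
      have hcμ : ν.card + 1 = μ.card := hF.2
      exact ih h μ hμK hμτ (by omega) hfμ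

/-- For a collection `C` with common value `v` and nonempty `I = C^red`,
with `N = closure(I)` and `E = {σ ∈ N ∖ I : f σ ≤ v}`, the exit set decomposes as
`E = {σ ∈ N ∖ I : f σ < v} ∪ {σ ∈ N ∖ I : f σ = v and σ upward noncritical w.r.t. C}`. -/
theorem statement15 (K : Finset (Finset ℕ)) (hK : IsComplex K) (f : Finset ℕ → ℝ)
    (hf : IsMorseBott K f) (C : Finset (Finset ℕ)) (hC : IsCollection K f C)
    (v : ℝ) (hv : ∀ τ ∈ C, f τ = v) (hne : (reducedOf K f C).Nonempty) :
    let I := reducedOf K f C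
    let N := closureOf I
    let E := N.filter fun σ => σ ∉ I ∧ f σ ≤ v
    E = (N.filter fun σ => σ ∉ I ∧ f σ < v) ∪
        (N.filter fun σ => σ ∉ I ∧ f σ = v ∧ UpNoncrit K f C σ) := by
  classical
  intro I N E
  ext σ
  simp only [E, N, I, Finset.mem_union, Finset.mem_filter]
  constructor
  · rintro ⟨hσN, hσI, hfσ⟩
    rcases lt_or_eq_of_le hfσ with h | h
    · exact Or.inl ⟨hσN, hσI, h⟩
    · refine Or.inr ⟨hσN, hσI, h, ?_⟩
      -- unpack N-membership
      obtain ⟨τ, hτI, hστ'⟩ := Finset.mem_biUnion.mp hσN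
      rw [Finset.mem_filter, Finset.mem_powerset] at hστ'
      obtain ⟨hστ, hσne'⟩ := hστ'
      have hσne : σ.Nonempty := Finset.nonempty_iff_ne_empty.mpr hσne'
      have hτred := Finset.mem_filter.mp hτI
      have hτC : τ ∈ C := hτred.1
      have hτK : τ ∈ K := hC.1.1 hτC
      have hσK : σ ∈ K := hK.2 τ hτK σ hστ hσne
      -- σ ∈ C by maximality
      have hσC : σ ∈ C := by
        by_contra hσC
        have hpre : IsPreCollection K f (insert σ C) := by
          refine ⟨Finset.insert_subset hσK hC.1.1, ⟨σ, Finset.mem_insert_self _ _⟩, ?_, ?_⟩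
          · intro a ha b hb
            have val : ∀ x ∈ insert σ C, f x = v := by
              intro x hx
              rcases Finset.mem_insert.mp hx with hx | hx
              · rw [hx, h]
              · exact hv x hx
            rw [val a ha, val b hb]
          · -- connectivity
            set r := fun x y => x ∈ insert σ C ∧ y ∈ insert σ C ∧
              (closureOf {x} ∩ closureOf {y}).Nonempty with hr
            have hrsymm : Symmetric r := by
              intro x y ⟨h1, h2, h3⟩
              exact ⟨h2, h1, by rwa [Finset.inter_comm]⟩
            have hedge : r σ τ := by
              refine ⟨Finset.mem_insert_self _ _, Finset.mem_insert_of_mem hτC, ⟨σ, ?_⟩⟩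
              rw [Finset.mem_inter]
              constructor <;>
              · refine Finset.mem_biUnion.mpr ⟨_, Finset.mem_singleton_self _, ?_⟩
                rw [Finset.mem_filter, Finset.mem_powerset]
                exact ⟨by first | exact le_refl σ | exact hστ, hσne'⟩
            have hmono : ∀ a ∈ C, ∀ b ∈ C, Relation.ReflTransGen r a b := by
              intro a ha b hb
              refine (Relation.ReflTransGen.mono ?_) a b (hC.1.2.2.2 a ha b hb)
              rintro x y ⟨h1, h2, h3⟩
              exact ⟨Finset.mem_insert_of_mem h1, Finset.mem_insert_of_mem h2, h3⟩
            intro a ha b hb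
            rcases Finset.mem_insert.mp ha with ha' | ha' <;>
              rcases Finset.mem_insert.mp hb with hb' | hb'
            · rw [ha', hb']
            · rw [ha']
              exact Relation.ReflTransGen.head hedge (hmono τ hτC b hb')
            · rw [hb']
              exact (haveI : Std.Symm r := ⟨fun _ _ h => hrsymm h⟩; Relation.ReflTransGen.symmetric.symm _ _)
                (Relation.ReflTransGen.head hedge (hmono τ hτC a ha'))
            · exact hmono a ha' b hb'
        have := hC.2 (insert σ C) hpre (Finset.subset_insert _ _)
        exact hσC (this ▸ Finset.mem_insert_self σ C)
      -- σ ∈ C \ I: up or down noncritical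
      have hσnotred : UpNoncrit K f C σ ∨ DownNoncrit K f C σ := by
        by_contra hcon
        push_neg at hcon
        exact hσI (Finset.mem_filter.mpr ⟨hσC, hcon.1, hcon.2⟩)
      rcases hσnotred with hup | hdown
      · exact hup
      · exfalso
        obtain ⟨w, hwK, hwC, hwF, hwf⟩ := hdown
        have hστne : σ ≠ τ := fun heq => hσI (heq ▸ hτI)
        have hcard : σ.card < τ.card :=
          Finset.card_lt_card (Finset.ssubset_iff_subset_ne.mpr ⟨hστ, hστne⟩)
        have hwcard : w.card + 1 = σ.card := hwF.2
        have hdn : DownNoncrit K f C τ := by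
          refine descend K hK f hf C hv hτK (hv τ hτC) (τ.card - w.card) (by omega)
            w hwK (hwF.1.trans hστ) (by omega) ?_
          rw [← h]; exact hwf
        exact hτred.2.2 hdn
  · rintro (⟨hσN, hσI, hfσ⟩ | ⟨hσN, hσI, hfσ, _⟩)
    · exact ⟨hσN, hσI, le_of_lt hfσ⟩
    · exact ⟨hσN, hσI, le_of_eq hfσ⟩
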